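/- Fix naturals p ≥ 1 and s, and write q = s / p (natural division) and t = s % p. If r : Fin p → ℕ satisfies ∑_j r_j = s and minimizes ∑_j 2^(r_j) among all tuples with that sum, then exactly t of the values r_j equal q + 1 and the remaining p − t values equal q; in particular the multiset of optimal segment lengths is uniquely determined. -/

import Mathlib

/-- Sum over an update at a point in terms of the original function. -/
lemma sum_comp_update {n : ℕ} (g : ℕ → ℕ) (f : Fin n → ℕ) (i : Fin n) (v : ℕ)
    (S : Finset (Fin n)) (hi : i ∈ S) :
    ∑ k ∈ S, g (Function.update f i v k) = g v + ∑ k ∈ S.erase i, g (f k) := by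
  have h1 : (fun k => g (Function.update f i v k)) =
      Function.update (fun k => g (f k)) i (g v) := by
    funext k
    by_cases hk : k = i
    · subst hk; simp
    · simp [Function.update, hk]
  rw [h1, Finset.sum_update_of_mem hi, Finset.sdiff_singleton_eq_erase]

lemma sum_split_two {n : ℕ} (g : ℕ → ℕ) (f : Fin n → ℕ) (i j : Fin n) (hij : i ≠ j) :
    ∑ k, g (f k) = g (f j) + (g (f i) + ∑ k ∈ (Finset.univ.erase j).erase i, g (f k)) := by
  rw [← Finset.add_sum_erase _ _ (Finset.mem_univ j)]
  congr 1
  rw [← Finset.add_sum_erase _ _ (Finset.mem_erase.mpr ⟨hij, Finset.mem_univ i⟩)]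

/-- Exact characterization of optimal segment lengths: with `q = s / p` and
`t = s % p`, any minimizer of `∑ j, 2^(r j)` subject to `∑ j, r j = s` has
exactly `t` segments of length `q + 1` and the remaining `p − t` segments of
length `q`; the optimal multiset of segment lengths is uniquely determined. -/
theorem optimal_multiset_unique (p s : ℕ) (hp : 1 ≤ p) (r : Fin p → ℕ)
    (hsum : ∑ j, r j = s)
    (hmin : ∀ r' : Fin p → ℕ, ∑ j, r' j = s → ∑ j, 2 ^ r j ≤ ∑ j, 2 ^ r' j) :
    (Finset.univ.filter fun j => r j = s / p + 1).card = s % p ∧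
    (Finset.univ.filter fun j => r j = s / p).card = p - s % p := by
  -- Step 1: any two values differ by at most one.
  have key : ∀ i j : Fin p, r i ≤ r j + 1 := by
    intro i j
    by_contra h
    push_neg at h
    have hij : r j + 2 ≤ r i := h
    have hne' : i ≠ j := by rintro rfl; omega
    set r' : Fin p → ℕ := Function.update (Function.update r i (r i - 1)) j (r j + 1)
      with hr'
    have hgen : ∀ g : ℕ → ℕ, ∑ k, g (r' k) =
        g (r j + 1) + (g (r i - 1) + ∑ k ∈ (Finset.univ.erase j).erase i, g (r k)) := by
      intro g
      rw [hr', sum_comp_update g _ j _ _ (Finset.mem_univ j)]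
      congr 1
      rw [sum_comp_update g r i _ _ (Finset.mem_erase.mpr ⟨hne', Finset.mem_univ i⟩)]
    have hsum' : ∑ k, r' k = s := by
      have h1 := hgen id
      have h2 := sum_split_two id r i j hne'
      simp only [id] at h1 h2
      omega
    have hlt : ∑ k, 2 ^ r' k < ∑ k, 2 ^ r k := by
      have h1 := hgen (fun x => 2 ^ x)
      have h2 := sum_split_two (fun x => 2 ^ x) r i j hne'
      have e1 : 2 ^ (r j + 1) = 2 * 2 ^ (r j) := by ring
      have e2 : 2 ^ (r i) = 2 * 2 ^ (r i - 1) := by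
        rw [← pow_succ']
        congr 1
        omega
      have e3 : (2 : ℕ) ^ (r j) < 2 ^ (r i - 1) := by
        apply Nat.pow_lt_pow_right (by norm_num)
        omega
      omega
    exact absurd (hmin r' hsum') (by omega)
  -- Step 2: find the minimum value.
  obtain ⟨i0, -, hmin0⟩ := Finset.exists_min_image Finset.univ r ⟨⟨0, hp⟩, Finset.mem_univ _⟩
  set m := r i0 with hm
  have hrange : ∀ j, r j = m ∨ r j = m + 1 := by
    intro j
    have h1 := hmin0 j (Finset.mem_univ j)
    have h2 := key j i0
    omega
  set A := Finset.univ.filter (fun j => r j = m + 1) with hA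
  set B := Finset.univ.filter (fun j => r j = m) with hB
  have hdisj : Disjoint A B := by
    rw [Finset.disjoint_filter]
    intro x _ hx
    omega
  have hunion : A ∪ B = Finset.univ := by
    ext x
    simp only [hA, hB, Finset.mem_union, Finset.mem_filter, Finset.mem_univ, true_and]
    have := hrange x
    tauto
  have hcard : A.card + B.card = p := by
    rw [← Finset.card_union_of_disjoint hdisj, hunion, Finset.card_univ, Fintype.card_fin]
  have hs : s = p * m + A.card := by
    rw [← hsum, ← hunion, Finset.sum_union hdisj]
    have hA' : ∑ j ∈ A, r j = A.card * (m + 1) := by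
      rw [Finset.sum_congr rfl (fun x hx => (Finset.mem_filter.mp hx).2), Finset.sum_const,
        smul_eq_mul]
    have hB' : ∑ j ∈ B, r j = B.card * m := by
      rw [Finset.sum_congr rfl (fun x hx => (Finset.mem_filter.mp hx).2), Finset.sum_const,
        smul_eq_mul]
    rw [hA', hB']
    nlinarith [hcard]
  have hi0B : i0 ∈ B := by simp [hB, hm]
  have hAcard : A.card < p := by
    have : 1 ≤ B.card := Finset.card_pos.mpr ⟨i0, hi0B⟩
    omega
  have hdiv : s / p = m := by
    rw [hs, Nat.mul_add_div (by omega), Nat.div_eq_of_lt hAcard]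
    omega
  have hmod : s % p = A.card := by
    rw [hs, Nat.mul_add_mod, Nat.mod_eq_of_lt hAcard]
  refine ⟨?_, ?_⟩
  · rw [hdiv, ← hA, hmod]
  · rw [hdiv, ← hB, hmod]
    omega
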